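/- For every τ ∈ ℂ with Im τ > 0 and all z, λ, κ ∈ ℂ: ϑ₁(κ,τ)²·ϑ₁(z+λ,τ)·ϑ₁(z−λ,τ) − ϑ₁(λ,τ)²·ϑ₁(z+κ,τ)·ϑ₁(z−κ,τ) = ϑ₁(z,τ)²·ϑ₁(κ+λ,τ)·ϑ₁(κ−λ,τ). -/

import Mathlib

open Complex

/-- Jacobi's first theta function
`ϑ₁(z,τ) = −∑_{m∈ℤ} exp(πi(m+1/2)²τ + 2πi(m+1/2)(z+1/2))` (here `theta1 τ z = ϑ₁(z,τ)`). -/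
noncomputable def theta1 (τ z : ℂ) : ℂ :=
  -∑' m : ℤ, Complex.exp ((Real.pi : ℂ) * Complex.I * ((m : ℂ) + 1 / 2) ^ 2 * τ +
    2 * (Real.pi : ℂ) * Complex.I * ((m : ℂ) + 1 / 2) * (z + 1 / 2))

namespace Theta1Aux

open Real in
/-- norm-summability of the jacobiTheta₂ term series. -/
lemma summable_norm_jt {τ : ℂ} (hτ : 0 < τ.im) (z : ℂ) :
    Summable fun n : ℤ => ‖jacobiTheta₂_term n z τ‖ := by
  refine (summable_pow_mul_jacobiTheta₂_term_bound |z.im| hτ 0).of_nonneg_of_le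
    (fun n => norm_nonneg _) ?_
  simpa only [pow_zero, one_mul] using norm_jacobiTheta₂_term_le hτ le_rfl le_rfl

/-- The term of theta1. -/
noncomputable def ff (τ z : ℂ) (m : ℤ) : ℂ :=
  Complex.exp ((Real.pi : ℂ) * Complex.I * ((m : ℂ) + 1 / 2) ^ 2 * τ +
    2 * (Real.pi : ℂ) * Complex.I * ((m : ℂ) + 1 / 2) * (z + 1 / 2))

lemma theta1_eq (τ z : ℂ) : theta1 τ z = -∑' m : ℤ, ff τ z m := rfl

/-- Auxiliary exponential term with integer index. -/
noncomputable def uu (τ w : ℂ) (s : ℤ) : ℂ :=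
  Complex.exp ((Real.pi : ℂ) * Complex.I * τ * (s : ℂ) ^ 2 / 2 +
    2 * (Real.pi : ℂ) * Complex.I * (s : ℂ) * w)

noncomputable def Pf (τ w : ℂ) : ℂ := ∑' k : ℤ, uu τ w (2 * k)

noncomputable def Qf (τ w : ℂ) : ℂ := ∑' k : ℤ, uu τ w (2 * k + 1)

lemma ff_eq (τ z : ℂ) (m : ℤ) :
    ff τ z m = Complex.exp ((Real.pi : ℂ) * Complex.I * τ / 4 +
      (Real.pi : ℂ) * Complex.I * (z + 1 / 2)) *
      jacobiTheta₂_term m (z + 1 / 2 + τ / 2) τ := by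
  rw [ff, jacobiTheta₂_term, ← Complex.exp_add]
  congr 1
  ring

lemma summable_norm_ff {τ : ℂ} (hτ : 0 < τ.im) (z : ℂ) :
    Summable fun m : ℤ => ‖ff τ z m‖ := by
  simp only [ff_eq, norm_mul]
  exact (summable_norm_jt hτ _).mul_left _

lemma im_two_tau {τ : ℂ} (hτ : 0 < τ.im) : 0 < (2 * τ).im := by
  have : (2 * τ).im = 2 * τ.im := by simp [Complex.mul_im]
  rw [this]; linarith

lemma uu_even (τ w : ℂ) (k : ℤ) : uu τ w (2 * k) = jacobiTheta₂_term k (2 * w) (2 * τ) := by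
  rw [uu, jacobiTheta₂_term]
  congr 1
  push_cast
  ring

lemma uu_odd (τ w : ℂ) (k : ℤ) :
    uu τ w (2 * k + 1) = Complex.exp ((Real.pi : ℂ) * Complex.I * τ / 2 +
      2 * (Real.pi : ℂ) * Complex.I * w) * jacobiTheta₂_term k (2 * w + τ) (2 * τ) := by
  rw [uu, jacobiTheta₂_term, ← Complex.exp_add]
  congr 1
  push_cast
  ring

lemma summable_norm_uu_even {τ : ℂ} (hτ : 0 < τ.im) (w : ℂ) :
    Summable fun k : ℤ => ‖uu τ w (2 * k)‖ := by
  simp only [uu_even]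
  exact summable_norm_jt (im_two_tau hτ) _

lemma summable_norm_uu_odd {τ : ℂ} (hτ : 0 < τ.im) (w : ℂ) :
    Summable fun k : ℤ => ‖uu τ w (2 * k + 1)‖ := by
  simp only [uu_odd, norm_mul]
  exact (summable_norm_jt (im_two_tau hτ) _).mul_left _

lemma uu_shift_even (τ w : ℂ) (k : ℤ) : uu τ (w + 1 / 2) (2 * k) = uu τ w (2 * k) := by
  rw [uu, uu, show (Real.pi : ℂ) * Complex.I * τ * ((2 * k : ℤ) : ℂ) ^ 2 / 2 +
      2 * (Real.pi : ℂ) * Complex.I * ((2 * k : ℤ) : ℂ) * (w + 1 / 2) =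
      ((Real.pi : ℂ) * Complex.I * τ * ((2 * k : ℤ) : ℂ) ^ 2 / 2 +
      2 * (Real.pi : ℂ) * Complex.I * ((2 * k : ℤ) : ℂ) * w) + (k : ℂ) * (2 * Real.pi * Complex.I)
      from by push_cast; ring,
    Complex.exp_add, Complex.exp_int_mul_two_pi_mul_I, mul_one]

lemma uu_shift_odd (τ w : ℂ) (k : ℤ) : uu τ (w + 1 / 2) (2 * k + 1) = -uu τ w (2 * k + 1) := by
  rw [uu, uu, show (Real.pi : ℂ) * Complex.I * τ * ((2 * k + 1 : ℤ) : ℂ) ^ 2 / 2 +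
      2 * (Real.pi : ℂ) * Complex.I * ((2 * k + 1 : ℤ) : ℂ) * (w + 1 / 2) =
      (((Real.pi : ℂ) * Complex.I * τ * ((2 * k + 1 : ℤ) : ℂ) ^ 2 / 2 +
      2 * (Real.pi : ℂ) * Complex.I * ((2 * k + 1 : ℤ) : ℂ) * w) +
      (k : ℂ) * (2 * Real.pi * Complex.I)) + Real.pi * Complex.I
      from by push_cast; ring,
    Complex.exp_add, Complex.exp_add, Complex.exp_int_mul_two_pi_mul_I, mul_one,
    Complex.exp_pi_mul_I, mul_neg_one]

lemma cross (τ x y : ℂ) (m n : ℤ) :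
    ff τ (x + y) m * ff τ (x - y) n = uu τ (x + 1 / 2) (m + n + 1) * uu τ y (m - n) := by
  rw [ff, ff, uu, uu, ← Complex.exp_add, ← Complex.exp_add]
  congr 1
  push_cast
  ring

/-- the even-sum sublattice equiv -/
noncomputable def eEven : ℤ × ℤ ≃ {p : ℤ × ℤ | Even (p.1 + p.2)} where
  toFun q := ⟨(q.1 + q.2, q.1 - q.2), ⟨q.1, by ring⟩⟩
  invFun p := ((p.1.1 + p.1.2) / 2, (p.1.1 - p.1.2) / 2)
  left_inv q := by
    obtain ⟨k, l⟩ := q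
    simp only [Prod.mk.injEq]
    omega
  right_inv p := by
    obtain ⟨⟨m, n⟩, h⟩ := p
    simp only [Set.mem_setOf_eq, Int.even_iff] at h
    apply Subtype.ext
    simp only [Prod.mk.injEq]
    omega

/-- the odd-sum sublattice equiv -/
noncomputable def eOdd : ℤ × ℤ ≃ ↥({p : ℤ × ℤ | Even (p.1 + p.2)}ᶜ) where
  toFun q := ⟨(q.1 + q.2, q.1 - q.2 - 1), by
    simp only [Set.mem_compl_iff, Set.mem_setOf_eq, Int.even_iff]
    omega⟩
  invFun p := ((p.1.1 + p.1.2 + 1) / 2, (p.1.1 - p.1.2 - 1) / 2)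
  left_inv q := by
    obtain ⟨k, l⟩ := q
    simp only [Prod.mk.injEq]
    omega
  right_inv p := by
    obtain ⟨⟨m, n⟩, h⟩ := p
    simp only [Set.mem_compl_iff, Set.mem_setOf_eq, Int.even_iff] at h
    apply Subtype.ext
    simp only [Prod.mk.injEq]
    omega

/-- The key product formula: `ϑ₁(x+y)ϑ₁(x−y) = P(x)Q(y) − Q(x)P(y)`. -/
lemma key {τ : ℂ} (hτ : 0 < τ.im) (x y : ℂ) :
    theta1 τ (x + y) * theta1 τ (x - y) = Pf τ x * Qf τ y - Qf τ x * Pf τ y := by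
  have h1 := summable_norm_ff hτ (x + y)
  have h2 := summable_norm_ff hτ (x - y)
  have hF : Summable fun p : ℤ × ℤ => ff τ (x + y) p.1 * ff τ (x - y) p.2 :=
    summable_mul_of_summable_norm h1 h2
  rw [theta1_eq, theta1_eq, neg_mul_neg, tsum_mul_tsum_of_summable_norm h1 h2,
    ← Summable.tsum_subtype_add_tsum_subtype_compl hF {p : ℤ × ℤ | Even (p.1 + p.2)}]
  have hev : ∑' p : {p : ℤ × ℤ | Even (p.1 + p.2)},
      ff τ (x + y) (p : ℤ × ℤ).1 * ff τ (x - y) (p : ℤ × ℤ).2 =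
      (∑' k : ℤ, uu τ (x + 1 / 2) (2 * k + 1)) * ∑' l : ℤ, uu τ y (2 * l) := by
    rw [← Equiv.tsum_eq eEven, tsum_mul_tsum_of_summable_norm (summable_norm_uu_odd hτ _)
      (summable_norm_uu_even hτ _)]
    refine tsum_congr fun q => ?_
    obtain ⟨k, l⟩ := q
    show ff τ (x + y) (k + l) * ff τ (x - y) (k - l) = _
    rw [cross, show k + l + (k - l) + 1 = 2 * k + 1 from by ring,
      show k + l - (k - l) = 2 * l from by ring]
  have hodd : ∑' p : ↥({p : ℤ × ℤ | Even (p.1 + p.2)}ᶜ),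
      ff τ (x + y) (p : ℤ × ℤ).1 * ff τ (x - y) (p : ℤ × ℤ).2 =
      (∑' k : ℤ, uu τ (x + 1 / 2) (2 * k)) * ∑' l : ℤ, uu τ y (2 * l + 1) := by
    rw [← Equiv.tsum_eq eOdd, tsum_mul_tsum_of_summable_norm (summable_norm_uu_even hτ _)
      (summable_norm_uu_odd hτ _)]
    refine tsum_congr fun q => ?_
    obtain ⟨k, l⟩ := q
    show ff τ (x + y) (k + l) * ff τ (x - y) (k - l - 1) = _
    rw [cross, show k + l + (k - l - 1) + 1 = 2 * k from by ring,
      show k + l - (k - l - 1) = 2 * l + 1 from by ring]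
  rw [hev, hodd]
  have hP : ∑' k : ℤ, uu τ (x + 1 / 2) (2 * k) = Pf τ x :=
    tsum_congr fun k => uu_shift_even τ x k
  have hQ : ∑' k : ℤ, uu τ (x + 1 / 2) (2 * k + 1) = -Qf τ x := by
    rw [Qf, ← tsum_neg]
    exact tsum_congr fun k => uu_shift_odd τ x k
  rw [hP, hQ]
  simp only [Pf, Qf]
  ring

end Theta1Aux

open Theta1Aux in
/-- The theta identity derived from the three-term equation:
`ϑ₁(κ)²ϑ₁(z+λ)ϑ₁(z−λ) − ϑ₁(λ)²ϑ₁(z+κ)ϑ₁(z−κ) = ϑ₁(z)²ϑ₁(κ+λ)ϑ₁(κ−λ)`. -/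
theorem theta1_three_term_identity (τ : ℂ) (hτ : 0 < τ.im) (z lam κ : ℂ) :
    theta1 τ κ ^ 2 * theta1 τ (z + lam) * theta1 τ (z - lam) -
      theta1 τ lam ^ 2 * theta1 τ (z + κ) * theta1 τ (z - κ) =
    theta1 τ z ^ 2 * theta1 τ (κ + lam) * theta1 τ (κ - lam) := by
  have hsq : ∀ w : ℂ, theta1 τ w ^ 2 = Pf τ w * Qf τ 0 - Qf τ w * Pf τ 0 := by
    intro w
    rw [sq]
    simpa using key hτ w 0
  rw [hsq, hsq, hsq, mul_assoc, mul_assoc, mul_assoc, key hτ z lam, key hτ z κ, key hτ κ lam]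
  ring
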